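/- The spin type B elementary symmetric polynomial ε_k^b = Σ_{1 ≤ i_1 < ... < i_k ≤ n} x_{i_1}^2 ⋯ x_{i_k}^2 lies in the kernel of the type B odd Demazure operator ∂_n^b, for every 1 ≤ k ≤ n. -/
import Mathlib


/-- The spin type B elementary symmetric polynomial
`ε_k^b = Σ_{i_1 < ... < i_k} x_{i_1}² ⋯ x_{i_k}²` lies in the kernel of `∂ₙᵇ`,
for every `1 ≤ k ≤ n`. -/
theorem stmt_14 (n : ℕ) (R : Type*) [Ring R] (x : Fin (n + 1) → R)
    (hx : ∀ a b, a ≠ b → x a * x b + x b * x a = 0)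
    (s : R →+* R) (hs : ∀ j, s (x j) = - x j)
    (D : R →ₗ[ℤ] R) (hD1 : D 1 = 0)
    (hDn : D (x (Fin.last n)) = 1)
    (hDj : ∀ j, j ≠ Fin.last n → D (x j) = 0)
    (hL : ∀ f g, D (f * g) = D f * g + s f * D g) :
    ∀ k : ℕ, 1 ≤ k → k ≤ n + 1 →
      D (∑ S ∈ Finset.powersetCard k (Finset.univ : Finset (Fin (n + 1))),
          ((S.sort (· ≤ ·)).map (fun i => x i ^ 2)).prod) = 0 := by
  have hDsq : ∀ j, D (x j ^ 2) = 0 := by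
    intro j
    rw [sq, hL]
    by_cases h : j = Fin.last n
    · subst h; rw [hDn, hs]; noncomm_ring
    · rw [hDj j h]; simp
  have hssq : ∀ j, s (x j ^ 2) = x j ^ 2 := by
    intro j; rw [map_pow, hs]; noncomm_ring
  have key : ∀ l : List (Fin (n + 1)),
      D ((l.map (fun i => x i ^ 2)).prod) = 0 := by
    intro l
    induction l with
    | nil => simpa using hD1
    | cons a t ih =>
        simp only [List.map_cons, List.prod_cons]
        rw [hL, hDsq, hssq, ih]
        simp
  intro k _ _
  rw [map_sum]
  exact Finset.sum_eq_zero fun S _ => key _
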